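/- arXiv:0809.4229 — 5 statements merged into one kernel-verified Lean document; each statement's English description precedes it below -/
import Mathlib

section
/- For every real number x, |x - tanh(x)| ≤ |x| * tanh²(x). -/
open Real

lemma tanh_hasDerivAt (x : ℝ) : HasDerivAt Real.tanh (1 / Real.cosh x ^ 2) x := by
  have h := ((Real.hasDerivAt_sinh x).div (Real.hasDerivAt_cosh x)
    (ne_of_gt (Real.cosh_pos x)))
  have hfun : (fun y => Real.sinh y / Real.cosh y) = Real.tanh := by
    funext y; rw [Real.tanh_eq_sinh_div_cosh]
  rw [show (Real.sinh / Real.cosh) = Real.tanh from hfun] at h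
  refine h.congr_deriv ?_
  have := Real.cosh_sq_sub_sinh_sq x
  congr 1
  nlinarith [Real.cosh_pos x]

lemma tanh_nonneg' {x : ℝ} (hx : 0 ≤ x) : 0 ≤ Real.tanh x := by
  rw [Real.tanh_eq_sinh_div_cosh]
  exact div_nonneg (Real.sinh_nonneg_iff.mpr hx) (Real.cosh_pos x).le

lemma tanh_sq_eq (x : ℝ) : Real.tanh x ^ 2 = 1 - 1 / Real.cosh x ^ 2 := by
  rw [Real.tanh_eq_sinh_div_cosh]
  have h := Real.cosh_sq_sub_sinh_sq x
  have hc := (Real.cosh_pos x).ne'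
  field_simp
  nlinarith

lemma g_hasDerivAt (y : ℝ) :
    HasDerivAt (fun y => y - Real.tanh y) (1 - 1 / Real.cosh y ^ 2) y :=
  (hasDerivAt_id y).sub (tanh_hasDerivAt y)

lemma f_hasDerivAt (y : ℝ) :
    HasDerivAt (fun y => y * Real.tanh y ^ 2 - y + Real.tanh y)
      (Real.tanh y ^ 2 + y * (2 * Real.tanh y * (1 / Real.cosh y ^ 2)) - 1
        + 1 / Real.cosh y ^ 2) y := by
  have h1 : HasDerivAt (fun y => Real.tanh y ^ 2)
      (2 * Real.tanh y * (1 / Real.cosh y ^ 2)) y := by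
    have : HasDerivAt (fun y => Real.tanh y ^ 2) _ y := (tanh_hasDerivAt y).pow 2
    convert this using 1; ring
  have h2 := (hasDerivAt_id y).mul h1
  have h3 : HasDerivAt (fun y => y * Real.tanh y ^ 2 - y + Real.tanh y) _ y := (h2.sub (hasDerivAt_id y)).add (tanh_hasDerivAt y)
  convert h3 using 1
  simp only [id_eq]; ring

lemma tanh_le_self {x : ℝ} (hx : 0 ≤ x) : Real.tanh x ≤ x := by
  have hmono : MonotoneOn (fun y => y - Real.tanh y) (Set.Ici 0) := by
    apply monotoneOn_of_deriv_nonneg (convex_Ici 0)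
    · exact fun y _ => ((g_hasDerivAt y).differentiableAt.continuousAt).continuousWithinAt
    · exact fun y _ => ((g_hasDerivAt y).differentiableAt).differentiableWithinAt
    · intro y hy
      rw [(g_hasDerivAt y).deriv, ← tanh_sq_eq]
      positivity
  have := hmono (Set.self_mem_Ici) (Set.mem_Ici.mpr hx) hx
  simp only [Real.tanh_zero, sub_zero] at this
  linarith

lemma key_ineq {x : ℝ} (hx : 0 ≤ x) : x - Real.tanh x ≤ x * Real.tanh x ^ 2 := by
  have hmono : MonotoneOn (fun y => y * Real.tanh y ^ 2 - y + Real.tanh y) (Set.Ici 0) := by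
    apply monotoneOn_of_deriv_nonneg (convex_Ici 0)
    · exact fun y _ => ((f_hasDerivAt y).differentiableAt.continuousAt).continuousWithinAt
    · exact fun y _ => ((f_hasDerivAt y).differentiableAt).differentiableWithinAt
    · intro y hy
      rw [interior_Ici, Set.mem_Ioi] at hy
      rw [(f_hasDerivAt y).deriv]
      have hsq := tanh_sq_eq y
      have ht := tanh_nonneg' hy.le
      have hc : (0:ℝ) < 1 / Real.cosh y ^ 2 := by positivity
      nlinarith [mul_nonneg (mul_nonneg hy.le ht) hc.le]
  have h := hmono (Set.self_mem_Ici) (Set.mem_Ici.mpr hx) hx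
  simp only [Real.tanh_zero, mul_zero, zero_mul, sub_zero, add_zero, pow_two] at h
  nlinarith [h]

lemma main_nonneg {x : ℝ} (hx : 0 ≤ x) :
    |x - Real.tanh x| ≤ |x| * Real.tanh x ^ 2 := by
  rw [abs_of_nonneg (by linarith [tanh_le_self hx]), abs_of_nonneg hx]
  exact key_ineq hx

theorem abs_sub_tanh_le_abs_mul_tanh_sq (x : ℝ) :
    |x - Real.tanh x| ≤ |x| * Real.tanh x ^ 2 := by
  rcases le_or_gt 0 x with hx | hx
  · exact main_nonneg hx
  · have h := main_nonneg (neg_nonneg.mpr hx.le)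
    rw [Real.tanh_neg] at h
    have h1 : |(-x) - (-Real.tanh x)| = |x - Real.tanh x| := by
      rw [show (-x) - (-Real.tanh x) = -(x - Real.tanh x) by ring, abs_neg]
    rw [h1, abs_neg] at h
    norm_num at h
    exact h
end

section
/- Let Ω be a nonempty finite type, H : Ω → ℝ, J a real number, and s : Ω → ℝ a function taking values in {-1, 1}. Define Z(H) = ∑_{σ ∈ Ω} exp(H(σ)) and ⟨f⟩_H = (∑_σ f(σ) exp(H(σ)))/Z(H). Then Z(H + J·s)/Z(H) = cosh(J) * (1 + tanh(J) * ⟨s⟩_H). -/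
theorem partition_ratio_eq_cosh_mul
    {Ω : Type*} [Fintype Ω] [Nonempty Ω] (H : Ω → ℝ) (J : ℝ) (s : Ω → ℝ)
    (hs : ∀ σ, s σ = -1 ∨ s σ = 1) :
    (∑ σ : Ω, Real.exp (H σ + J * s σ)) / (∑ σ : Ω, Real.exp (H σ)) =
      Real.cosh J * (1 + Real.tanh J *
        ((∑ σ : Ω, s σ * Real.exp (H σ)) / (∑ σ : Ω, Real.exp (H σ)))) := by
  have hZ : 0 < ∑ σ : Ω, Real.exp (H σ) :=
    Finset.sum_pos (fun σ _ => Real.exp_pos _) Finset.univ_nonempty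
  have hnum : (∑ σ : Ω, Real.exp (H σ + J * s σ)) =
      Real.cosh J * (∑ σ : Ω, Real.exp (H σ)) +
      Real.sinh J * (∑ σ : Ω, s σ * Real.exp (H σ)) := by
    rw [Finset.mul_sum, Finset.mul_sum, ← Finset.sum_add_distrib]
    refine Finset.sum_congr rfl fun σ _ => ?_
    rcases hs σ with h | h <;>
      simp [h, Real.exp_add, Real.cosh_eq, Real.sinh_eq, Real.exp_neg] <;> ring
  have hch : Real.cosh J ≠ 0 := ne_of_gt (Real.cosh_pos J)
  rw [hnum, Real.tanh_eq_sinh_div_cosh]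
  field_simp
end

section
/- Let Ω be a nonempty finite type, H : Ω → ℝ, J ∈ ℝ, and s : Ω → ℝ with s(σ) ∈ {-1,1} for all σ. With Z and ⟨·⟩ as the partition function and Gibbs expectation for H, one has ln Z(H + J·s) - ln Z(H) ≤ ln cosh(J) + tanh(J) * ⟨s⟩_H. -/
theorem log_partition_diff_le
    {Ω : Type*} [Fintype Ω] [Nonempty Ω] (H : Ω → ℝ) (J : ℝ) (s : Ω → ℝ)
    (hs : ∀ σ, s σ = -1 ∨ s σ = 1) :
    Real.log (∑ σ : Ω, Real.exp (H σ + J * s σ)) -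
      Real.log (∑ σ : Ω, Real.exp (H σ)) ≤
    Real.log (Real.cosh J) + Real.tanh J *
      ((∑ σ : Ω, s σ * Real.exp (H σ)) / (∑ σ : Ω, Real.exp (H σ))) := by
  set Z := ∑ σ : Ω, Real.exp (H σ) with hZdef
  set S := ∑ σ : Ω, s σ * Real.exp (H σ) with hSdef
  have hZpos : 0 < Z := Finset.sum_pos (fun σ _ => Real.exp_pos _) Finset.univ_nonempty
  have hcosh : 0 < Real.cosh J := Real.cosh_pos J
  -- key pointwise identity
  have hsum : (∑ σ : Ω, Real.exp (H σ + J * s σ)) = Real.cosh J * Z + Real.sinh J * S := by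
    rw [hZdef, hSdef, Finset.mul_sum, Finset.mul_sum, ← Finset.sum_add_distrib]
    refine Finset.sum_congr rfl fun σ _ => ?_
    rcases hs σ with h | h <;>
      rw [h, Real.exp_add, Real.cosh_eq, Real.sinh_eq] <;>
      simp only [mul_one, mul_neg_one, Real.exp_neg] <;> field_simp <;> ring
  have hSZ : |S / Z| ≤ 1 := by
    rw [abs_div, abs_of_pos hZpos, div_le_one hZpos]
    calc |S| ≤ ∑ σ : Ω, |s σ * Real.exp (H σ)| := Finset.abs_sum_le_sum_abs _ _
    _ = Z := by
        refine Finset.sum_congr rfl fun σ _ => ?_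
        rcases hs σ with h | h <;> simp [abs_mul, h, abs_of_pos (Real.exp_pos (H σ))]
  have htanh : |Real.tanh J| < 1 := by
    rw [Real.tanh_eq_sinh_div_cosh, abs_div, abs_of_pos hcosh, div_lt_one hcosh, abs_lt]
    constructor <;> nlinarith [Real.cosh_sq J, hcosh]
  have hpos : 0 < 1 + Real.tanh J * (S / Z) := by
    have h1 : |Real.tanh J * (S / Z)| < 1 := by
      rw [abs_mul]
      calc |Real.tanh J| * |S / Z| ≤ |Real.tanh J| * 1 :=
            mul_le_mul_of_nonneg_left hSZ (abs_nonneg _)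
      _ < 1 := by simpa using htanh
    nlinarith [abs_nonneg (Real.tanh J * (S / Z)), neg_abs_le (Real.tanh J * (S / Z))]
  have hfact : Real.cosh J * Z + Real.sinh J * S = Real.cosh J * Z * (1 + Real.tanh J * (S / Z)) := by
    rw [Real.tanh_eq_sinh_div_cosh]
    field_simp
  rw [hsum, hfact, Real.log_mul (by positivity) (ne_of_gt hpos),
    Real.log_mul (ne_of_gt hcosh) (ne_of_gt hZpos)]
  have hlog : Real.log (1 + Real.tanh J * (S / Z)) ≤ Real.tanh J * (S / Z) := by
    have := Real.log_le_sub_one_of_pos hpos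
    linarith
  linarith
end

section
/- Let Ω be a nonempty finite type, let N be a natural number, let J : Fin N → ℝ, and let s : Fin N → Ω → ℝ with s k σ ∈ {-1,1} for all k, σ. Define H_n(σ) = ∑_{k < n} J k * s k σ and Z_n = ∑_{σ ∈ Ω} exp(H_n(σ)). Then for all n ≤ N, ln Z_N - ln Z_n ≤ ∑_{k=n}^{N-1} ( ln cosh(J k) + |tanh(J k)| ). -/
open Real Finset

lemma exp_mul_pm_bound (J x : ℝ) (hx : x = -1 ∨ x = 1) :
    Real.exp (J * x) ≤ Real.cosh J * Real.exp |Real.tanh J| := by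
  have hc : 0 < Real.cosh J := Real.cosh_pos J
  have ht : Real.tanh J * Real.cosh J = Real.sinh J := by
    rw [Real.tanh_eq_sinh_div_cosh]; field_simp
  have h1 : (1 : ℝ) + |Real.tanh J| ≤ Real.exp |Real.tanh J| := by
    linarith [Real.add_one_le_exp |Real.tanh J|]
  have habs1 : Real.tanh J ≤ |Real.tanh J| := le_abs_self _
  have habs2 : -|Real.tanh J| ≤ Real.tanh J := neg_abs_le _
  rcases hx with h | h <;> subst h
  · have he : Real.exp (J * -1) = Real.cosh J - Real.sinh J := by
      rw [Real.cosh_sub_sinh]; ring_nf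
    rw [he, ← ht]
    nlinarith
  · have he : Real.exp (J * 1) = Real.cosh J + Real.sinh J := by
      rw [Real.cosh_add_sinh]; ring_nf
    rw [he, ← ht]
    nlinarith

theorem log_partition_telescoped_bound
    {Ω : Type*} [Fintype Ω] [Nonempty Ω] (N : ℕ) (J : Fin N → ℝ)
    (s : Fin N → Ω → ℝ) (hs : ∀ k σ, s k σ = -1 ∨ s k σ = 1)
    (n : ℕ) (hn : n ≤ N) :
    Real.log (∑ σ : Ω, Real.exp (∑ k : Fin N, J k * s k σ)) -
      Real.log (∑ σ : Ω, Real.exp (∑ k : Fin N,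
        if (k : ℕ) < n then J k * s k σ else 0)) ≤
    ∑ k : Fin N, if n ≤ (k : ℕ) then
      Real.log (Real.cosh (J k)) + |Real.tanh (J k)| else 0 := by
  set Z : ℕ → ℝ := fun m => ∑ σ : Ω, Real.exp (∑ k : Fin N,
      if (k : ℕ) < m then J k * s k σ else 0) with hZ
  have hZpos : ∀ m, 0 < Z m := fun m =>
    Finset.sum_pos (fun σ _ => Real.exp_pos _) Finset.univ_nonempty
  -- one-step bound
  have step : ∀ m (hm : m < N),
      Real.log (Z (m + 1)) ≤ Real.log (Z m) +
        (Real.log (Real.cosh (J ⟨m, hm⟩)) + |Real.tanh (J ⟨m, hm⟩)|) := by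
    intro m hm
    set Jm := J ⟨m, hm⟩ with hJm
    have hsplit : ∀ σ : Ω, (∑ k : Fin N, if (k : ℕ) < m + 1 then J k * s k σ else 0)
        = (∑ k : Fin N, if (k : ℕ) < m then J k * s k σ else 0) + Jm * s ⟨m, hm⟩ σ := by
      intro σ
      have hk : ∀ k : Fin N, (if (k : ℕ) < m + 1 then J k * s k σ else 0) =
          (if (k : ℕ) < m then J k * s k σ else 0) +
          (if k = (⟨m, hm⟩ : Fin N) then J k * s k σ else 0) := by
        intro k
        by_cases h : k = (⟨m, hm⟩ : Fin N)
        · subst h; simp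
        · have hne : (k : ℕ) ≠ m := fun hh => h (Fin.ext hh)
          by_cases h2 : (k : ℕ) < m
          · simp [h, h2, Nat.lt_succ_of_lt h2]
          · have h3 : ¬ (k : ℕ) < m + 1 := by omega
            simp [h, h2, h3]
      rw [Finset.sum_congr rfl (fun k _ => hk k), Finset.sum_add_distrib,
        Finset.sum_ite_eq' Finset.univ (⟨m, hm⟩ : Fin N)]
      simp [hJm]
    have hle : Z (m + 1) ≤ Z m * (Real.cosh Jm * Real.exp |Real.tanh Jm|) := by
      rw [hZ]
      simp only
      rw [Finset.sum_mul]
      apply Finset.sum_le_sum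
      intro σ _
      rw [hsplit σ, Real.exp_add]
      exact mul_le_mul_of_nonneg_left (exp_mul_pm_bound Jm (s ⟨m, hm⟩ σ) (hs _ σ))
        (Real.exp_pos _).le
    calc Real.log (Z (m + 1)) ≤ Real.log (Z m * (Real.cosh Jm * Real.exp |Real.tanh Jm|)) :=
          Real.log_le_log (hZpos _) hle
      _ = Real.log (Z m) + (Real.log (Real.cosh Jm) + |Real.tanh Jm|) := by
          rw [Real.log_mul (hZpos m).ne' (by positivity), Real.log_mul
            (Real.cosh_pos Jm).ne' (Real.exp_pos _).ne', Real.log_exp]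
  -- telescoping by induction
  have key : ∀ d, n + d ≤ N →
      Real.log (Z (n + d)) - Real.log (Z n) ≤
        ∑ k : Fin N, if n ≤ (k : ℕ) ∧ (k : ℕ) < n + d then
          Real.log (Real.cosh (J k)) + |Real.tanh (J k)| else 0 := by
    intro d
    induction d with
    | zero =>
      intro _
      have h0 : (∑ k : Fin N, if n ≤ (k : ℕ) ∧ (k : ℕ) < n + 0 then
          Real.log (Real.cosh (J k)) + |Real.tanh (J k)| else 0) = 0 :=
        Finset.sum_eq_zero (fun k _ => if_neg (by omega))
      rw [h0]; norm_num
    | succ d ih =>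
      intro hd
      have hd' : n + d ≤ N := by omega
      have hm : n + d < N := by omega
      have h1 := step (n + d) hm
      have h2 := ih hd'
      have hsum : (∑ k : Fin N, if n ≤ (k : ℕ) ∧ (k : ℕ) < n + d + 1 then
            Real.log (Real.cosh (J k)) + |Real.tanh (J k)| else 0)
          = (∑ k : Fin N, if n ≤ (k : ℕ) ∧ (k : ℕ) < n + d then
            Real.log (Real.cosh (J k)) + |Real.tanh (J k)| else 0)
            + (Real.log (Real.cosh (J ⟨n + d, hm⟩)) + |Real.tanh (J ⟨n + d, hm⟩)|) := by
        have hk : ∀ k : Fin N, (if n ≤ (k : ℕ) ∧ (k : ℕ) < n + d + 1 then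
            Real.log (Real.cosh (J k)) + |Real.tanh (J k)| else 0) =
            (if n ≤ (k : ℕ) ∧ (k : ℕ) < n + d then
              Real.log (Real.cosh (J k)) + |Real.tanh (J k)| else 0) +
            (if k = (⟨n + d, hm⟩ : Fin N) then
              Real.log (Real.cosh (J k)) + |Real.tanh (J k)| else 0) := by
          intro k
          by_cases h : k = (⟨n + d, hm⟩ : Fin N)
          · subst h
            have c1 : n ≤ n + d ∧ n + d < n + d + 1 := by omega
            have c2 : ¬(n ≤ n + d ∧ n + d < n + d) := by omega
            simp [c1, c2]
          · have hne : (k : ℕ) ≠ n + d := fun hh => h (Fin.ext hh)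
            rw [if_neg h, add_zero]
            by_cases h2 : n ≤ (k : ℕ) ∧ (k : ℕ) < n + d
            · rw [if_pos (by omega), if_pos h2]
            · rw [if_neg (by omega), if_neg h2]
        rw [Finset.sum_congr rfl (fun k _ => hk k), Finset.sum_add_distrib,
          Finset.sum_ite_eq' Finset.univ (⟨n + d, hm⟩ : Fin N)]
        simp
      rw [show n + (d + 1) = n + d + 1 from rfl, hsum]
      linarith
  have hfin := key (N - n) (by omega)
  have hNn : n + (N - n) = N := by omega
  rw [hNn] at hfin
  have hZN : Z N = ∑ σ : Ω, Real.exp (∑ k : Fin N, J k * s k σ) := by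
    rw [hZ]; simp [Fin.is_lt]
  have hRHS : (∑ k : Fin N, if n ≤ (k : ℕ) ∧ (k : ℕ) < N then
      Real.log (Real.cosh (J k)) + |Real.tanh (J k)| else 0)
      = ∑ k : Fin N, if n ≤ (k : ℕ) then
        Real.log (Real.cosh (J k)) + |Real.tanh (J k)| else 0 := by
    apply Finset.sum_congr rfl
    intro k _
    simp [k.is_lt]
  rw [hZN, hRHS] at hfin
  exact hfin
end

section
/- Let Ω be a finite probability space, Ω' = ({-1,1})^V the spin configuration space, and let J₁,…,J_N be independent real-valued integrable random variables. Let s k : Ω' → {-1,1} be fixed functions. Define the quenched pressure P_n = E[ln ∑_{σ ∈ Ω'} exp(∑_{k<n} J k · s k σ)], where for each k the Gibbs expectation ⟨s k⟩_{k-1} computed with the first k-1 couplings is independent of J k. Then P_N ≤ P_n + ∑_{k=n}^{N-1} ( E[ln cosh(J k)] + |E[tanh(J k)]| ). -/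
open MeasureTheory

section Aux

private lemma abs_tanh_lt_one' (x : ℝ) : |Real.tanh x| < 1 := by
  have h1 : Real.sinh x < Real.cosh x := Real.sinh_lt_cosh x
  have h2 : -Real.cosh x < Real.sinh x := by
    have := Real.sinh_lt_cosh (-x)
    simp only [Real.sinh_neg, Real.cosh_neg] at this
    linarith
  have hc : 0 < Real.cosh x := Real.cosh_pos x
  rw [Real.tanh_eq_sinh_div_cosh, abs_div, abs_of_pos hc, div_lt_one hc, abs_lt]
  exact ⟨h2, h1⟩

private lemma log_cosh_nonneg' (x : ℝ) : 0 ≤ Real.log (Real.cosh x) :=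
  Real.log_nonneg (Real.one_le_cosh x)

private lemma log_cosh_le_abs' (x : ℝ) : Real.log (Real.cosh x) ≤ |x| := by
  have h : Real.cosh x ≤ Real.exp |x| := by
    rw [Real.cosh_eq]
    have h1 : Real.exp x ≤ Real.exp |x| := Real.exp_le_exp.2 (le_abs_self x)
    have h2 : Real.exp (-x) ≤ Real.exp |x| := Real.exp_le_exp.2 (neg_le_abs x)
    linarith
  calc Real.log (Real.cosh x) ≤ Real.log (Real.exp |x|) :=
        Real.log_le_log (Real.cosh_pos x) h
    _ = |x| := Real.log_exp _

private lemma sinh_eq_cosh_mul_tanh' (x : ℝ) :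
    Real.sinh x = Real.cosh x * Real.tanh x := by
  rw [Real.tanh_eq_sinh_div_cosh]
  field_simp

private lemma measurable_tanh' : Measurable Real.tanh := by
  have h := Real.continuous_sinh.div Real.continuous_cosh
    (fun x => (Real.cosh_pos x).ne')
  have heq : Real.tanh = fun x => Real.sinh x / Real.cosh x :=
    funext fun x => Real.tanh_eq_sinh_div_cosh x
  rw [heq]
  exact h.measurable

private lemma log_step' {Z1 Z W c t : ℝ} (hc : 0 < c) (ht : |t| < 1) (hZ : 0 < Z)
    (hW : |W| ≤ Z) (h1 : Z1 = c * Z + (c * t) * W) :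
    Real.log Z1 ≤ Real.log c + Real.log Z + t * (W / Z) := by
  have htW : |t * W| ≤ |t| * Z := by
    rw [abs_mul]; exact mul_le_mul_of_nonneg_left hW (abs_nonneg _)
  have hpos : 0 < Z + t * W := by
    nlinarith [neg_abs_le (t * W), abs_nonneg t]
  have h2 : Z1 = c * (Z + t * W) := by rw [h1]; ring
  rw [h2, Real.log_mul hc.ne' hpos.ne']
  have h3 := Real.log_le_sub_one_of_pos (div_pos hpos hZ)
  have h4 : Real.log ((Z + t * W) / Z) = Real.log (Z + t * W) - Real.log Z :=
    Real.log_div hpos.ne' hZ.ne'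
  have h5 : (Z + t * W) / Z - 1 = t * (W / Z) := by field_simp; ring
  rw [h4, h5] at h3
  linarith

private lemma integrable_of_bounded' {α : Type*} [MeasurableSpace α] {μ : Measure α}
    [IsProbabilityMeasure μ] {f : α → ℝ} (hm : Measurable f) (C : ℝ)
    (h : ∀ ω, |f ω| ≤ C) : Integrable f μ :=
  Integrable.mono' (integrable_const C) hm.aestronglyMeasurable
    (Filter.Eventually.of_forall fun ω => by simpa using h ω)

private lemma measurable_ite_const' {α : Type*} [MeasurableSpace α] (c : Prop) [Decidable c]
    {g : α → ℝ} (hg : Measurable g) : Measurable (fun ω => if c then g ω else 0) := by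
  by_cases h : c <;> simp [h, hg, measurable_const]

end Aux

set_option maxHeartbeats 1000000 in
theorem quenched_pressure_bound_independent
    {α : Type*} [MeasurableSpace α] (μ : Measure α) [IsProbabilityMeasure μ]
    (V N : ℕ) (J : Fin N → α → ℝ)
    (hmeas : ∀ k, Measurable (J k))
    (hint : ∀ k, Integrable (J k) μ)
    (hindep : ProbabilityTheory.iIndepFun J μ)
    (s : Fin N → (Fin V → (({-1, 1} : Finset ℤ))) → ℝ)
    (hs : ∀ k σ, s k σ = -1 ∨ s k σ = 1)
    (n : ℕ) (hn : n ≤ N) :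
    (∫ ω, Real.log (∑ σ : Fin V → (({-1, 1} : Finset ℤ)),
        Real.exp (∑ k : Fin N, J k ω * s k σ)) ∂μ) ≤
      (∫ ω, Real.log (∑ σ : Fin V → (({-1, 1} : Finset ℤ)),
        Real.exp (∑ k : Fin N, if (k : ℕ) < n then J k ω * s k σ else 0)) ∂μ) +
      ∑ k : Fin N, if n ≤ (k : ℕ) then
        (∫ ω, Real.log (Real.cosh (J k ω)) ∂μ) + |∫ ω, Real.tanh (J k ω) ∂μ|
      else 0 := by
  classical
  -- basic setup
  have hone : (1 : ℤ) ∈ ({-1, 1} : Finset ℤ) := by decide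
  let σ₀ : Fin V → (({-1, 1} : Finset ℤ)) := fun _ => ⟨1, hone⟩
  haveI : Nonempty (Fin V → (({-1, 1} : Finset ℤ))) := ⟨σ₀⟩
  have hs1 : ∀ k σ, |s k σ| = 1 := fun k σ => by
    rcases hs k σ with h | h <;> simp [h]
  set H : ℕ → α → (Fin V → (({-1, 1} : Finset ℤ))) → ℝ :=
    fun m ω σ => ∑ k : Fin N, if (k : ℕ) < m then J k ω * s k σ else 0 with hHdef
  set Z : ℕ → α → ℝ :=
    fun m ω => ∑ σ : Fin V → (({-1, 1} : Finset ℤ)), Real.exp (H m ω σ) with hZdef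
  have hZpos : ∀ m ω, 0 < Z m ω := fun m ω =>
    Finset.sum_pos (fun σ _ => Real.exp_pos _) Finset.univ_nonempty
  have hHmeas : ∀ m σ, Measurable (fun ω => H m ω σ) := by
    intro m σ
    exact Finset.measurable_sum _ fun k _ =>
      measurable_ite_const' _ ((hmeas k).mul_const (s k σ))
  have hZmeas : ∀ m, Measurable (Z m) := fun m =>
    Finset.measurable_sum _ fun σ _ => Real.measurable_exp.comp (hHmeas m σ)
  -- integrability of log Z
  set B : α → ℝ := fun ω => ∑ k : Fin N, |J k ω| with hBdef
  have hBint : Integrable B μ := integrable_finset_sum _ fun k _ => (hint k).abs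
  have hHabs : ∀ m ω σ, |H m ω σ| ≤ B ω := by
    intro m ω σ
    calc |H m ω σ| ≤ ∑ k : Fin N, |if (k : ℕ) < m then J k ω * s k σ else 0| :=
          Finset.abs_sum_le_sum_abs _ _
      _ ≤ B ω := Finset.sum_le_sum fun k _ => by
          split_ifs with h
          · rw [abs_mul, hs1 k σ, mul_one]
          · simp [abs_nonneg]
  have hcard : (1 : ℝ) ≤ (Fintype.card (Fin V → (({-1, 1} : Finset ℤ))) : ℝ) :=
    Nat.one_le_cast.mpr Fintype.card_pos
  have hlogZbound : ∀ m ω, |Real.log (Z m ω)| ≤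
      Real.log (Fintype.card (Fin V → (({-1, 1} : Finset ℤ)))) + B ω := by
    intro m ω
    have hlogc : 0 ≤ Real.log (Fintype.card (Fin V → (({-1, 1} : Finset ℤ)))) :=
      Real.log_nonneg hcard
    have hBnn : 0 ≤ B ω := Finset.sum_nonneg fun k _ => abs_nonneg _
    rw [abs_le]
    constructor
    · have h1 : Real.exp (-B ω) ≤ Z m ω := by
        calc Real.exp (-B ω) ≤ Real.exp (H m ω σ₀) :=
              Real.exp_le_exp.2 (by linarith [neg_abs_le (H m ω σ₀), hHabs m ω σ₀])
          _ ≤ Z m ω := Finset.single_le_sum (fun σ _ => (Real.exp_pos _).le)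
              (Finset.mem_univ σ₀)
      have := Real.log_le_log (Real.exp_pos _) h1
      rw [Real.log_exp] at this
      linarith
    · have h2 : Z m ω ≤ (Fintype.card (Fin V → (({-1, 1} : Finset ℤ))) : ℝ) *
          Real.exp (B ω) := by
        calc Z m ω ≤ ∑ _σ : Fin V → (({-1, 1} : Finset ℤ)), Real.exp (B ω) :=
              Finset.sum_le_sum fun σ _ =>
                Real.exp_le_exp.2 (by linarith [le_abs_self (H m ω σ), hHabs m ω σ])
          _ = _ := by rw [Finset.sum_const, nsmul_eq_mul]; simp [Finset.card_univ]
      have := Real.log_le_log (hZpos m ω) h2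
      rw [Real.log_mul (by positivity) (Real.exp_pos _).ne', Real.log_exp] at this
      linarith
  have hlogZint : ∀ m, Integrable (fun ω => Real.log (Z m ω)) μ := by
    intro m
    have hgint : Integrable (fun ω =>
        Real.log (Fintype.card (Fin V → (({-1, 1} : Finset ℤ)))) + B ω) μ :=
      (integrable_const _).add hBint
    refine Integrable.mono' hgint
      ((Real.measurable_log.comp (hZmeas m)).aestronglyMeasurable)
      (Filter.Eventually.of_forall fun ω => ?_)
    simpa using hlogZbound m ω
  -- the key one-step inequality
  have key : ∀ (m : ℕ) (hm : m < N),
      ∫ ω, Real.log (Z (m + 1) ω) ∂μ ≤ (∫ ω, Real.log (Z m ω) ∂μ) +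
        ((∫ ω, Real.log (Real.cosh (J ⟨m, hm⟩ ω)) ∂μ) +
          |∫ ω, Real.tanh (J ⟨m, hm⟩ ω) ∂μ|) := by
    intro m hm
    set m' : Fin N := ⟨m, hm⟩ with hm'def
    set W : α → ℝ := fun ω => ∑ σ : Fin V → (({-1, 1} : Finset ℤ)),
      Real.exp (H m ω σ) * s m' σ with hWdef
    set G : α → ℝ := fun ω => W ω / Z m ω with hGdef
    have hWmeas : Measurable W := Finset.measurable_sum _ fun σ _ =>
      (Real.measurable_exp.comp (hHmeas m σ)).mul_const _
    have hGmeas : Measurable G := hWmeas.div (hZmeas m)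
    have hWabs : ∀ ω, |W ω| ≤ Z m ω := by
      intro ω
      calc |W ω| ≤ ∑ σ : Fin V → (({-1, 1} : Finset ℤ)),
            |Real.exp (H m ω σ) * s m' σ| := Finset.abs_sum_le_sum_abs _ _
        _ = Z m ω := Finset.sum_congr rfl fun σ _ => by
            rw [abs_mul, abs_of_pos (Real.exp_pos _), hs1 m' σ, mul_one]
    have hGabs : ∀ ω, |G ω| ≤ 1 := by
      intro ω
      show |W ω / Z m ω| ≤ 1
      rw [abs_div, abs_of_pos (hZpos m ω), div_le_one (hZpos m ω)]
      exact hWabs ω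
    have hHsucc : ∀ ω σ, H (m + 1) ω σ = H m ω σ + J m' ω * s m' σ := by
      intro ω σ
      have hstep : ∀ k : Fin N, (if (k : ℕ) < m + 1 then J k ω * s k σ else 0) =
          (if (k : ℕ) < m then J k ω * s k σ else 0) +
          (if k = m' then J k ω * s k σ else 0) := by
        intro k
        by_cases h1 : (k : ℕ) < m
        · have hk2 : (k : ℕ) ≠ m := by omega
          have hk : k ≠ m' := fun h => hk2 (by rw [h])
          simp [h1, Nat.lt_succ_of_lt h1, hk]
        · by_cases h2 : k = m'
          · subst h2
            have hv : (m' : ℕ) = m := rfl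
            simp [hv]
          · have hkm : (k : ℕ) ≠ m := fun h => h2 (Fin.ext h)
            have h3 : ¬ (k : ℕ) < m + 1 := by omega
            simp [h1, h2, h3]
      show (∑ k : Fin N, if (k : ℕ) < m + 1 then J k ω * s k σ else 0) =
        (∑ k : Fin N, if (k : ℕ) < m then J k ω * s k σ else 0) + J m' ω * s m' σ
      rw [Finset.sum_congr rfl fun k _ => hstep k, Finset.sum_add_distrib,
        Finset.sum_ite_eq' Finset.univ m']
      simp
    have hZsucc : ∀ ω, Z (m + 1) ω =
        Real.cosh (J m' ω) * Z m ω + (Real.cosh (J m' ω) * Real.tanh (J m' ω)) * W ω := by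
      intro ω
      show (∑ σ : Fin V → (({-1, 1} : Finset ℤ)), Real.exp (H (m + 1) ω σ)) = _
      have : Real.cosh (J m' ω) * Z m ω +
          (Real.cosh (J m' ω) * Real.tanh (J m' ω)) * W ω =
          ∑ σ : Fin V → (({-1, 1} : Finset ℤ)),
            (Real.cosh (J m' ω) * Real.exp (H m ω σ) +
              Real.sinh (J m' ω) * (Real.exp (H m ω σ) * s m' σ)) := by
        rw [← sinh_eq_cosh_mul_tanh']
        show _ = ∑ σ : Fin V → (({-1, 1} : Finset ℤ)),
            (Real.cosh (J m' ω) * Real.exp (H m ω σ) +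
              Real.sinh (J m' ω) * (Real.exp (H m ω σ) * s m' σ))
        rw [Finset.sum_add_distrib, ← Finset.mul_sum, ← Finset.mul_sum]
      rw [this]
      refine Finset.sum_congr rfl fun σ _ => ?_
      rw [hHsucc ω σ, Real.exp_add]
      rcases hs m' σ with h | h
      · rw [h]
        have he : J m' ω * (-1 : ℝ) = -(J m' ω) := by ring
        rw [he]
        have h4 := (Real.cosh_sub_sinh (J m' ω)).symm
        linear_combination Real.exp (H m ω σ) * h4
      · rw [h, mul_one]
        have h4 := (Real.cosh_add_sinh (J m' ω)).symm
        linear_combination Real.exp (H m ω σ) * h4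
    -- pointwise log inequality
    have hpt : ∀ ω, Real.log (Z (m + 1) ω) ≤
        Real.log (Real.cosh (J m' ω)) + Real.log (Z m ω) +
          Real.tanh (J m' ω) * G ω := by
      intro ω
      exact log_step' (Real.cosh_pos _) (abs_tanh_lt_one' _) (hZpos m ω)
        (hWabs ω) (hZsucc ω)
    -- integrability
    have I1 : Integrable (fun ω => Real.log (Real.cosh (J m' ω))) μ := by
      refine Integrable.mono' (hint m').abs
        ((Real.measurable_log.comp
          (Real.continuous_cosh.measurable.comp (hmeas m'))).aestronglyMeasurable)
        (Filter.Eventually.of_forall fun ω => ?_)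
      rw [Real.norm_eq_abs, abs_of_nonneg (log_cosh_nonneg' _)]
      exact log_cosh_le_abs' _
    have htanhmeas : Measurable fun ω => Real.tanh (J m' ω) :=
      measurable_tanh'.comp (hmeas m')
    have Itanh : Integrable (fun ω => Real.tanh (J m' ω)) μ :=
      integrable_of_bounded' htanhmeas 1 fun ω => (abs_tanh_lt_one' _).le
    have IG : Integrable G μ := integrable_of_bounded' hGmeas 1 hGabs
    have I3 : Integrable (fun ω => Real.tanh (J m' ω) * G ω) μ := by
      refine integrable_of_bounded' (htanhmeas.mul hGmeas) 1 fun ω => ?_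
      rw [abs_mul]
      calc |Real.tanh (J m' ω)| * |G ω| ≤ 1 * 1 :=
            mul_le_mul (abs_tanh_lt_one' _).le (hGabs ω) (abs_nonneg _) zero_le_one
        _ = 1 := by ring
    -- independence
    have hindepG : ProbabilityTheory.IndepFun (fun ω => Real.tanh (J m' ω)) G μ := by
      set S : Finset (Fin N) := Finset.univ.filter (fun k => (k : ℕ) < m) with hSdef
      have hdisj : Disjoint S ({m'} : Finset (Fin N)) := by
        rw [Finset.disjoint_singleton_right, hSdef]
        simp
        exact le_refl m
      have hIF := hindep.indepFun_finset S {m'} hdisj hmeas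
      set φ : ((i : S) → ℝ) → ℝ := fun x =>
        (∑ σ : Fin V → (({-1, 1} : Finset ℤ)),
          Real.exp (∑ i : S, x i * s i σ) * s m' σ) /
        (∑ σ : Fin V → (({-1, 1} : Finset ℤ)),
          Real.exp (∑ i : S, x i * s i σ)) with hφdef
      have hφ : Measurable φ := by
        apply Measurable.div
        · exact Finset.measurable_sum _ fun σ _ =>
            (Real.measurable_exp.comp (Finset.measurable_sum _ fun i _ =>
              (measurable_pi_apply i).mul_const _)).mul_const _
        · exact Finset.measurable_sum _ fun σ _ =>
            Real.measurable_exp.comp (Finset.measurable_sum _ fun i _ =>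
              (measurable_pi_apply i).mul_const _)
      set ψ : ((i : ({m'} : Finset (Fin N))) → ℝ) → ℝ := fun x =>
        Real.tanh (x ⟨m', Finset.mem_singleton_self m'⟩) with hψdef
      have hψ : Measurable ψ := measurable_tanh'.comp (measurable_pi_apply _)
      have hHS : ∀ (ω : α) (σ : Fin V → (({-1, 1} : Finset ℤ))),
          (∑ i : S, J i.1 ω * s i.1 σ) = H m ω σ := by
        intro ω σ
        have h1 : (∑ i : S, J i.1 ω * s i.1 σ) = ∑ k ∈ S, J k ω * s k σ :=
          Finset.sum_coe_sort S (fun k : Fin N => J k ω * s k σ)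
        rw [h1, hSdef, Finset.sum_filter]
      have hcomp := (hIF.comp hφ hψ).symm
      have heq1 : (ψ ∘ fun a (i : ({m'} : Finset (Fin N))) => J i a) =
          (fun ω => Real.tanh (J m' ω)) := rfl
      have heq2 : (φ ∘ fun a (i : S) => J i a) = G := by
        funext ω
        simp only [Function.comp, hφdef, hGdef, hWdef, hZdef]
        congr 1
        · exact Finset.sum_congr rfl fun σ _ => by rw [hHS ω σ]
        · exact Finset.sum_congr rfl fun σ _ => by rw [hHS ω σ]
      rw [heq1, heq2] at hcomp
      exact hcomp
    have hmul : ∫ ω, Real.tanh (J m' ω) * G ω ∂μ =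
        (∫ ω, Real.tanh (J m' ω) ∂μ) * ∫ ω, G ω ∂μ :=
      hindepG.integral_mul_eq_mul_integral Itanh.aestronglyMeasurable IG.aestronglyMeasurable
    have hGint_abs : |∫ ω, G ω ∂μ| ≤ 1 := by
      calc |∫ ω, G ω ∂μ| ≤ ∫ ω, |G ω| ∂μ := by
            simpa [Real.norm_eq_abs] using norm_integral_le_integral_norm G (μ := μ)
        _ ≤ ∫ _ω, (1 : ℝ) ∂μ := integral_mono IG.abs (integrable_const 1)
            fun ω => hGabs ω
        _ = 1 := by simp
    have hprod : ∫ ω, Real.tanh (J m' ω) * G ω ∂μ ≤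
        |∫ ω, Real.tanh (J m' ω) ∂μ| := by
      rw [hmul]
      calc (∫ ω, Real.tanh (J m' ω) ∂μ) * ∫ ω, G ω ∂μ ≤
            |(∫ ω, Real.tanh (J m' ω) ∂μ) * ∫ ω, G ω ∂μ| := le_abs_self _
        _ = |∫ ω, Real.tanh (J m' ω) ∂μ| * |∫ ω, G ω ∂μ| := abs_mul _ _
        _ ≤ |∫ ω, Real.tanh (J m' ω) ∂μ| * 1 :=
            mul_le_mul_of_nonneg_left hGint_abs (abs_nonneg _)
        _ = _ := mul_one _
    -- put together
    have hmono : ∫ ω, Real.log (Z (m + 1) ω) ∂μ ≤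
        ∫ ω, (Real.log (Real.cosh (J m' ω)) + Real.log (Z m ω) +
          Real.tanh (J m' ω) * G ω) ∂μ :=
      integral_mono (hlogZint (m + 1)) (((I1.add (hlogZint m)).add I3)) hpt
    have I12 : Integrable (fun ω => Real.log (Real.cosh (J m' ω)) +
        Real.log (Z m ω)) μ := I1.add (hlogZint m)
    rw [integral_add I12 I3, integral_add I1 (hlogZint m)] at hmono
    linarith
  -- induction
  set c : Fin N → ℝ := fun k =>
    (∫ ω, Real.log (Real.cosh (J k ω)) ∂μ) + |∫ ω, Real.tanh (J k ω) ∂μ| with hcdef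
  have main : ∀ m, n ≤ m → m ≤ N →
      ∫ ω, Real.log (Z m ω) ∂μ ≤ (∫ ω, Real.log (Z n ω) ∂μ) +
        ∑ k : Fin N, if n ≤ (k : ℕ) ∧ (k : ℕ) < m then c k else 0 := by
    intro m hm
    induction m, hm using Nat.le_induction with
    | base =>
      intro _
      have : (∑ k : Fin N, if n ≤ (k : ℕ) ∧ (k : ℕ) < n then c k else 0) = 0 :=
        Finset.sum_eq_zero fun k _ => if_neg (by omega)
      rw [this, add_zero]
    | succ m hm ih =>
      intro hmN
      have hm' : m < N := hmN
      have hsum : (∑ k : Fin N, if n ≤ (k : ℕ) ∧ (k : ℕ) < m + 1 then c k else 0) =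
          (∑ k : Fin N, if n ≤ (k : ℕ) ∧ (k : ℕ) < m then c k else 0) + c ⟨m, hm'⟩ := by
        have hsingle : c ⟨m, hm'⟩ =
            ∑ k : Fin N, if k = ⟨m, hm'⟩ then c k else 0 := by
          rw [Finset.sum_ite_eq' Finset.univ]; simp
        rw [hsingle, ← Finset.sum_add_distrib]
        refine Finset.sum_congr rfl fun k _ => ?_
        by_cases hk : k = ⟨m, hm'⟩
        · subst hk
          simp [hm]
        · have hkm : (k : ℕ) ≠ m := fun h => hk (Fin.ext h)
          have hiff : (n ≤ (k : ℕ) ∧ (k : ℕ) < m + 1) ↔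
              (n ≤ (k : ℕ) ∧ (k : ℕ) < m) := by omega
          rw [if_neg hk, add_zero, if_congr hiff rfl rfl]
      rw [hsum]
      have h1 := key m hm'
      have h2 := ih (le_of_lt hm')
      have hce : c ⟨m, hm'⟩ = (∫ ω, Real.log (Real.cosh (J ⟨m, hm'⟩ ω)) ∂μ) +
          |∫ ω, Real.tanh (J ⟨m, hm'⟩ ω) ∂μ| := rfl
      rw [hce]
      linarith
  have hfin := main N hn le_rfl
  -- rewrite goal in terms of Z
  have hrwN : ∀ ω, (∑ σ : Fin V → (({-1, 1} : Finset ℤ)),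
      Real.exp (∑ k : Fin N, J k ω * s k σ)) = Z N ω := by
    intro ω
    show _ = ∑ σ : Fin V → (({-1, 1} : Finset ℤ)), Real.exp (H N ω σ)
    refine Finset.sum_congr rfl fun σ _ => ?_
    show Real.exp _ = Real.exp (∑ k : Fin N, if (k : ℕ) < N then J k ω * s k σ else 0)
    exact congrArg Real.exp (Finset.sum_congr rfl fun k _ => (if_pos k.isLt).symm)
  have hsumeq : (∑ k : Fin N, if n ≤ (k : ℕ) ∧ (k : ℕ) < N then c k else 0) =
      ∑ k : Fin N, if n ≤ (k : ℕ) then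
        (∫ ω, Real.log (Real.cosh (J k ω)) ∂μ) + |∫ ω, Real.tanh (J k ω) ∂μ|
      else 0 := by
    refine Finset.sum_congr rfl fun k _ => ?_
    have hk := k.isLt
    by_cases h : n ≤ (k : ℕ) <;> simp [h, hk, hcdef]
  calc (∫ ω, Real.log (∑ σ : Fin V → (({-1, 1} : Finset ℤ)),
        Real.exp (∑ k : Fin N, J k ω * s k σ)) ∂μ)
      = ∫ ω, Real.log (Z N ω) ∂μ := by
        refine integral_congr_ae (Filter.Eventually.of_forall fun ω => ?_)
        exact congrArg Real.log (hrwN ω)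
    _ ≤ (∫ ω, Real.log (Z n ω) ∂μ) +
        ∑ k : Fin N, if n ≤ (k : ℕ) ∧ (k : ℕ) < N then c k else 0 := hfin
    _ = _ := by rw [hsumeq]
end
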